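/- Point identification of the first-interval challenge effect. Assume Consistency, Exposure necessity, Blinding, Treatment exchangeability, Positivity, and Exposure exchangeability, together with P(E1[0]=1) > 0, E[Y1[0,1]] > 0 and E[ΔY1 | A=0] > 0. Then E[ΔY1 | A=1]/E[ΔY1 | A=0] = E[Y1[1,1]]/E[Y1[0,1]]; that is, the first-interval observed incidence ratio IR1 equals 1 − VE1ch, the first-interval challenge effect being point identified from a standard two-arm trial. -/

import Mathlib

open MeasureTheory ProbabilityTheory
open scoped ProbabilityTheory

/-- Point identification of the first-interval challenge effect: IR1 = 1 - VE1ch. -/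
theorem first_interval_challenge_identification
    {Ω : Type*} [MeasurableSpace Ω] (μ : Measure Ω) [IsProbabilityMeasure μ]
    (A E1 E2 DY1 DY2 : Ω → ℝ)
    (E1p : ℝ → Ω → ℝ) (E2p Y1p Y2p Wp : ℝ → ℝ → Ω → ℝ)
    (hAm : Measurable A) (hE1m : Measurable E1) (hE2m : Measurable E2)
    (hDY1m : Measurable DY1) (hDY2m : Measurable DY2)
    (hE1pm : ∀ a ∈ ({0, 1} : Set ℝ), Measurable (E1p a))
    (hE2pm : ∀ a ∈ ({0, 1} : Set ℝ), ∀ e1 ∈ ({0, 1} : Set ℝ), Measurable (E2p a e1))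
    (hY1pm : ∀ a ∈ ({0, 1} : Set ℝ), ∀ e1 ∈ ({0, 1} : Set ℝ), Measurable (Y1p a e1))
    (hY2pm : ∀ a ∈ ({0, 1} : Set ℝ), ∀ e2 ∈ ({0, 1} : Set ℝ), Measurable (Y2p a e2))
    (hWpm : ∀ a ∈ ({0, 1} : Set ℝ), ∀ e1 ∈ ({0, 1} : Set ℝ), Measurable (Wp a e1))
    (hAr : ∀ ω, A ω = 0 ∨ A ω = 1) (hE1r : ∀ ω, E1 ω = 0 ∨ E1 ω = 1)
    (hE2r : ∀ ω, E2 ω = 0 ∨ E2 ω = 1)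
    (hDY1r : ∀ ω, DY1 ω = 0 ∨ DY1 ω = 1) (hDY2r : ∀ ω, DY2 ω = 0 ∨ DY2 ω = 1)
    (hE1pr : ∀ a ∈ ({0, 1} : Set ℝ), ∀ ω, E1p a ω = 0 ∨ E1p a ω = 1)
    (hE2pr : ∀ a ∈ ({0, 1} : Set ℝ), ∀ e1 ∈ ({0, 1} : Set ℝ), ∀ ω,
      E2p a e1 ω = 0 ∨ E2p a e1 ω = 1)
    (hY1pr : ∀ a ∈ ({0, 1} : Set ℝ), ∀ e1 ∈ ({0, 1} : Set ℝ), ∀ ω,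
      Y1p a e1 ω = 0 ∨ Y1p a e1 ω = 1)
    (hY2pr : ∀ a ∈ ({0, 1} : Set ℝ), ∀ e2 ∈ ({0, 1} : Set ℝ), ∀ ω,
      Y2p a e2 ω = 0 ∨ Y2p a e2 ω = 1)
    (hWpr : ∀ a ∈ ({0, 1} : Set ℝ), ∀ e1 ∈ ({0, 1} : Set ℝ), ∀ ω,
      Wp a e1 ω = 0 ∨ Wp a e1 ω = 1)
    (hmono : ∀ ω, DY1 ω = 1 → DY2 ω = 0)
    -- Consistency
    (hconsE1 : ∀ a ∈ ({0, 1} : Set ℝ), ∀ᵐ ω ∂μ, A ω = a → E1 ω = E1p a ω)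
    (hconsY1 : ∀ a ∈ ({0, 1} : Set ℝ), ∀ e1 ∈ ({0, 1} : Set ℝ),
      ∀ᵐ ω ∂μ, A ω = a → E1 ω = e1 → DY1 ω = Y1p a e1 ω)
    (hconsE2 : ∀ a ∈ ({0, 1} : Set ℝ), ∀ e1 ∈ ({0, 1} : Set ℝ),
      ∀ᵐ ω ∂μ, A ω = a → E1 ω = e1 → E2 ω = E2p a e1 ω)
    (hconsY2 : ∀ a ∈ ({0, 1} : Set ℝ), ∀ e2 ∈ ({0, 1} : Set ℝ),
      ∀ᵐ ω ∂μ, A ω = a → E1 ω = 0 → E2 ω = e2 → DY2 ω = Y2p a e2 ω)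
    (hconsW : ∀ a ∈ ({0, 1} : Set ℝ), ∀ e1 ∈ ({0, 1} : Set ℝ),
      ∀ᵐ ω ∂μ, A ω = a → E1 ω = e1 → DY1 ω = 0 → E2 ω = 1 → DY2 ω = Wp a e1 ω)
    -- Exposure necessity
    (hnecY1 : ∀ a ∈ ({0, 1} : Set ℝ), ∀ᵐ ω ∂μ, Y1p a 0 ω = 0)
    (hnecY2 : ∀ a ∈ ({0, 1} : Set ℝ), ∀ᵐ ω ∂μ, Y2p a 0 ω = 0)
    (hnecE2 : ∀ᵐ ω ∂μ, E2 ω = 0 → DY2 ω = 0)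
    -- Blinding
    (hblind1 : ∀ᵐ ω ∂μ, E1p 0 ω = E1p 1 ω)
    (hblind2 : ∀ᵐ ω ∂μ, E2p 0 0 ω = E2p 1 0 ω)
    -- Treatment exchangeability
    (hexch : IndepFun A (fun ω => ![E1p 0 ω, E1p 1 ω,
      E2p 0 0 ω, E2p 0 1 ω, E2p 1 0 ω, E2p 1 1 ω,
      Y1p 0 0 ω, Y1p 0 1 ω, Y1p 1 0 ω, Y1p 1 1 ω,
      Y2p 0 0 ω, Y2p 0 1 ω, Y2p 1 0 ω, Y2p 1 1 ω,
      Wp 0 0 ω, Wp 0 1 ω, Wp 1 0 ω, Wp 1 1 ω]) μ)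
    -- Positivity
    (hpos : 0 < (μ {ω | A ω = 1}).toReal ∧ (μ {ω | A ω = 1}).toReal < 1)
    -- Exposure exchangeability
    (heeY1 : ∀ a ∈ ({0, 1} : Set ℝ), ∀ e1 ∈ ({0, 1} : Set ℝ), IndepFun (E1p a) (Y1p a e1) μ)
    (heeY2cond : ∀ a ∈ ({0, 1} : Set ℝ), ∀ e2 ∈ ({0, 1} : Set ℝ), ∀ e ∈ ({0, 1} : Set ℝ),
      IndepFun (E1p a) (Y2p a e2) (μ[|{ω | E2p a 0 ω = e}]))
    (heeE2 : ∀ a ∈ ({0, 1} : Set ℝ), ∀ e2 ∈ ({0, 1} : Set ℝ), IndepFun (E2p a 0) (Y2p a e2) μ)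
    -- Nondegeneracy
    (hd3 : 0 < (μ {ω | E1p 0 ω = 1}).toReal)
    (hd4 : 0 < ∫ ω, Y1p 0 1 ω ∂μ)
    (hd1 : 0 < ∫ ω, DY1 ω ∂(μ[|{ω | A ω = 0}])) :
    (∫ ω, DY1 ω ∂(μ[|{ω | A ω = 1}])) / (∫ ω, DY1 ω ∂(μ[|{ω | A ω = 0}])) =
      (∫ ω, Y1p 1 1 ω ∂μ) / (∫ ω, Y1p 0 1 ω ∂μ) := by
  have h01 : (0:ℝ) ∈ ({0, 1} : Set ℝ) := by simp
  have h11 : (1:ℝ) ∈ ({0, 1} : Set ℝ) := by simp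
  set V : Ω → Fin 18 → ℝ := fun ω => ![E1p 0 ω, E1p 1 ω,
      E2p 0 0 ω, E2p 0 1 ω, E2p 1 0 ω, E2p 1 1 ω,
      Y1p 0 0 ω, Y1p 0 1 ω, Y1p 1 0 ω, Y1p 1 1 ω,
      Y2p 0 0 ω, Y2p 0 1 ω, Y2p 1 0 ω, Y2p 1 1 ω,
      Wp 0 0 ω, Wp 0 1 ω, Wp 1 0 ω, Wp 1 1 ω] with hV
  -- integrability of binary functions
  have hint : ∀ (f : Ω → ℝ), Measurable f → (∀ ω, f ω = 0 ∨ f ω = 1) → Integrable f μ := by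
    intro f hm hr
    refine Integrable.mono' (integrable_const 1) hm.aestronglyMeasurable (ae_of_all _ ?_)
    intro ω; rcases hr ω with h | h <;> simp [h]
  -- integral of a binary function is the measure of its support
  have hbinInt : ∀ (f : Ω → ℝ), Measurable f → (∀ ω, f ω = 0 ∨ f ω = 1) →
      ∫ ω, f ω ∂μ = (μ {ω | f ω = 1}).toReal := by
    intro f hm hr
    have hs : MeasurableSet {ω | f ω = 1} := hm (measurableSet_singleton 1)
    have heq : (fun ω => f ω) = Set.indicator {ω | f ω = 1} (fun _ => (1:ℝ)) := by
      funext ω; rcases hr ω with h | h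
      · rw [Set.indicator_of_notMem (by simp [Set.mem_setOf_eq, h])]; exact h
      · rw [Set.indicator_of_mem (by exact h)]; exact h
    rw [heq, integral_indicator_const _ hs]; simp; rfl
  -- the key identification: E[DY1 | A = a] = E[E1p a] * E[Y1p a 1]
  have key : ∀ a ∈ ({0, 1} : Set ℝ), ∀ i j : Fin 18, (∀ ω, V ω i = E1p a ω) →
      (∀ ω, V ω j = Y1p a 1 ω) → μ {ω | A ω = a} ≠ 0 →
      ∫ ω, DY1 ω ∂(μ[|{ω | A ω = a}]) = (∫ ω, E1p a ω ∂μ) * ∫ ω, Y1p a 1 ω ∂μ := by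
    intro a ha i j hi hj hμa
    have hsA : MeasurableSet {ω | A ω = a} := hAm (measurableSet_singleton a)
    have hE1am := hE1pm a ha
    have hY1am := hY1pm a ha 1 h11
    have hgm : Measurable (fun ω => E1p a ω * Y1p a 1 ω) := hE1am.mul hY1am
    have hgr : ∀ ω, E1p a ω * Y1p a 1 ω = 0 ∨ E1p a ω * Y1p a 1 ω = 1 := by
      intro ω
      rcases hE1pr a ha ω with h | h <;> rcases hY1pr a ha 1 h11 ω with h' | h' <;>
        simp [h, h']
    -- a.e. on {A = a}, DY1 = E1p a * Y1p a 1
    have hae : ∀ᵐ ω ∂μ, A ω = a → DY1 ω = E1p a ω * Y1p a 1 ω := by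
      filter_upwards [hconsE1 a ha, hconsY1 a ha 0 h01, hconsY1 a ha 1 h11, hnecY1 a ha]
        with ω h1 h2 h3 h4 hA
      rcases hE1r ω with hE | hE
      · rw [h2 hA hE, h4, ← h1 hA, hE, zero_mul]
      · rw [h3 hA hE, ← h1 hA, hE, one_mul]
    have hres : ∫ ω in {ω | A ω = a}, DY1 ω ∂μ
        = ∫ ω in {ω | A ω = a}, E1p a ω * Y1p a 1 ω ∂μ := by
      refine setIntegral_congr_ae hsA ?_
      filter_upwards [hae] with ω h hmem using h hmem
    -- rewrite set integral using indicator of A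
    have hind : ∫ ω in {ω | A ω = a}, E1p a ω * Y1p a 1 ω ∂μ
        = ∫ ω, (Set.indicator ({a} : Set ℝ) (fun _ => (1:ℝ)) (A ω)) * (E1p a ω * Y1p a 1 ω) ∂μ := by
      rw [← integral_indicator hsA]
      congr 1; funext ω
      by_cases h : A ω = a
      · simp [Set.indicator_of_mem, h]
      · simp [Set.indicator_of_notMem, h]
    -- independence of the indicator and the product, from treatment exchangeability
    have hφm : Measurable (Set.indicator ({a} : Set ℝ) (fun _ => (1:ℝ))) :=
      measurable_const.indicator (measurableSet_singleton a)
    have hψm : Measurable (fun v : Fin 18 → ℝ => v i * v j) :=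
      (measurable_pi_apply i).mul (measurable_pi_apply j)
    have hindep := hexch.comp hφm hψm
    have hψV : (fun v : Fin 18 → ℝ => v i * v j) ∘ V = fun ω => E1p a ω * Y1p a 1 ω := by
      funext ω; simp only [Function.comp_apply, hi ω, hj ω]
    rw [hψV] at hindep
    have hφr : ∀ ω, Set.indicator ({a} : Set ℝ) (fun _ => (1:ℝ)) (A ω) = 0 ∨
        Set.indicator ({a} : Set ℝ) (fun _ => (1:ℝ)) (A ω) = 1 := by
      intro ω; by_cases h : A ω = a
      · right; simp [h]
      · left; simp [h]
    have hprod := IndepFun.integral_mul_eq_mul_integral hindep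
      (hint _ (hφm.comp hAm) hφr).aestronglyMeasurable (hint _ hgm hgr).aestronglyMeasurable
    have hprod' : (∫ ω, Set.indicator ({a} : Set ℝ) (fun _ => (1:ℝ)) (A ω) *
        (E1p a ω * Y1p a 1 ω) ∂μ) = (∫ ω, Set.indicator ({a} : Set ℝ) (fun _ => (1:ℝ)) (A ω) ∂μ) *
        ∫ ω, E1p a ω * Y1p a 1 ω ∂μ := hprod
    have hφint : ∫ ω, Set.indicator ({a} : Set ℝ) (fun _ => (1:ℝ)) (A ω) ∂μ
        = (μ {ω | A ω = a}).toReal := by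
      rw [hbinInt (fun ω => Set.indicator ({a} : Set ℝ) (fun _ => (1:ℝ)) (A ω)) (hφm.comp hAm) hφr]
      have hseteq : {ω | Set.indicator ({a} : Set ℝ) (fun _ => (1:ℝ)) (A ω) = 1}
          = {ω | A ω = a} := by
        ext ω
        simp only [Set.mem_setOf_eq]
        constructor
        · intro h; by_contra hc
          rw [Set.indicator_of_notMem (by simpa using hc)] at h
          norm_num at h
        · intro h; simp [h]
      rw [hseteq]
    have hsplit := (heeY1 a ha 1 h11).integral_mul_eq_mul_integral
      (hint _ hE1am (hE1pr a ha)).aestronglyMeasurable (hint _ hY1am (hY1pr a ha 1 h11)).aestronglyMeasurable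
    have hsplit' : (∫ ω, E1p a ω * Y1p a 1 ω ∂μ)
        = (∫ ω, E1p a ω ∂μ) * ∫ ω, Y1p a 1 ω ∂μ := hsplit
    have hne : (μ {ω | A ω = a}).toReal ≠ 0 := by
      simp [ENNReal.toReal_ne_zero, hμa, measure_ne_top]
    calc ∫ ω, DY1 ω ∂(μ[|{ω | A ω = a}])
        = (μ {ω | A ω = a})⁻¹.toReal • ∫ ω in {ω | A ω = a}, DY1 ω ∂μ := by
          rw [show μ[|{ω | A ω = a}] = (μ {ω | A ω = a})⁻¹ • μ.restrict {ω | A ω = a} from rfl,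
            integral_smul_measure]
      _ = (μ {ω | A ω = a}).toReal⁻¹ * ((μ {ω | A ω = a}).toReal *
            ((∫ ω, E1p a ω ∂μ) * ∫ ω, Y1p a 1 ω ∂μ)) := by
          rw [hres, hind, hprod', hφint, hsplit', ENNReal.toReal_inv, smul_eq_mul]
      _ = (∫ ω, E1p a ω ∂μ) * ∫ ω, Y1p a 1 ω ∂μ := by
          rw [← mul_assoc, inv_mul_cancel₀ hne, one_mul]
  -- nonvanishing of the two arm probabilities
  have hsA1 : MeasurableSet {ω | A ω = 1} := hAm (measurableSet_singleton 1)
  have hA1ne : μ {ω | A ω = (1:ℝ)} ≠ 0 := by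
    intro h; rw [h] at hpos; simp at hpos
  have hA1lt : μ {ω | A ω = (1:ℝ)} < 1 :=
    (ENNReal.toReal_lt_toReal (measure_ne_top μ _) ENNReal.one_ne_top).mp (by simpa using hpos.2)
  have hA0set : {ω | A ω = (0:ℝ)} = {ω | A ω = (1:ℝ)}ᶜ := by
    ext ω; simp only [Set.mem_setOf_eq, Set.mem_compl_iff]
    rcases hAr ω with h | h <;> simp [h]
  have hA0ne : μ {ω | A ω = (0:ℝ)} ≠ 0 := by
    rw [hA0set, prob_compl_eq_one_sub hsA1]
    simp only [ne_eq, tsub_eq_zero_iff_le, not_le]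
    exact hA1lt
  have hi1 : ∀ ω, V ω (1 : Fin 18) = E1p 1 ω := fun ω => rfl
  have hj1 : ∀ ω, V ω (9 : Fin 18) = Y1p 1 1 ω := fun ω => rfl
  have hi0 : ∀ ω, V ω (0 : Fin 18) = E1p 0 ω := fun ω => rfl
  have hj0 : ∀ ω, V ω (7 : Fin 18) = Y1p 0 1 ω := fun ω => rfl
  rw [key 1 h11 1 9 hi1 hj1 hA1ne, key 0 h01 0 7 hi0 hj0 hA0ne]
  -- blinding: E[E1p 1] = E[E1p 0]
  have hb : ∫ ω, E1p 0 ω ∂μ = ∫ ω, E1p 1 ω ∂μ := integral_congr_ae hblind1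
  have hcne : ∫ ω, E1p 0 ω ∂μ ≠ 0 := by
    rw [hbinInt _ (hE1pm 0 h01) (hE1pr 0 h01)]
    exact ne_of_gt hd3
  rw [← hb, mul_div_mul_left _ _ hcne]
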